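/- In the acyclic network setting, ‖Φ(y)‖ → ∞ as ‖y‖ → ∞ with y ranging over D; i.e., for every M there exists R such that y ∈ D and ‖y‖ ≥ R imply ‖Φ(y)‖ ≥ M. Equivalently, the preimage under Φ of any bounded subset of [0,∞)^J is bounded in D. -/

import Mathlib

open scoped Classical

/-- Stations visited by class `k` strictly before station `j` along its route. -/
def priorStations {J K : ℕ} (path : Fin K → List (Fin J)) (k : Fin K) (j : Fin J) :
    Finset (Fin J) :=
  ((path k).takeWhile (fun i => i ≠ j)).toFinset

/-- The map `Φ`: the minimum over the empty set is interpreted as `+∞`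
and `H k (+∞) = 0` (bounded support above). -/
noncomputable def PhiNet {J K : ℕ} (path : Fin K → List (Fin J))
    (ρ : Fin K → Fin J → ℝ) (H : Fin K → ℝ → ℝ) (y : Fin J → ℝ) : Fin J → ℝ :=
  fun j => ∑ k ∈ Finset.univ.filter (fun k => j ∈ path k),
    ρ k j * max (H k (y j) -
      (if h : (priorStations path k j).Nonempty
        then H k ((priorStations path k j).inf' h y) else 0)) 0

/-- `π ∈ Π`: for every `m`, the station `π m` can be reached through the
stations `π 0, …, π (m-1)`, i.e. some class visits `π m` with all of its
prior stations among `π 0, …, π (m-1)`. -/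
def AdmissiblePerm {J K : ℕ} (path : Fin K → List (Fin J)) (π : Equiv.Perm (Fin J)) : Prop :=
  ∀ m : Fin J, ∃ k : Fin K, π m ∈ path k ∧
    ∀ i ∈ priorStations path k (π m), ∃ m' : Fin J, m' < m ∧ π m' = i

/-- The set `D^π` of (3.12): the coordinates are ordered along `π` and
`y (π m) ≤ max_{k ∈ K_{m-1}^π(π m)} y_k^*`. -/
def Dpi {J K : ℕ} (path : Fin K → List (Fin J)) (ystar : Fin K → ℝ)
    (π : Equiv.Perm (Fin J)) : Set (Fin J → ℝ) :=
  {y | (∀ m m' : Fin J, m ≤ m' → y (π m') ≤ y (π m)) ∧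
    ∀ m : Fin J, ∃ k : Fin K,
      (π m ∈ path k ∧ ∀ i ∈ priorStations path k (π m), ∃ m' : Fin J, m' < m ∧ π m' = i) ∧
      y (π m) ≤ ystar k}

/-- The set `D = ⋃_{π ∈ Π} D^π` of (3.13). -/
def Dset {J K : ℕ} (path : Fin K → List (Fin J)) (ystar : Fin K → ℝ) : Set (Fin J → ℝ) :=
  ⋃ π ∈ {π : Equiv.Perm (Fin J) | AdmissiblePerm path π}, Dpi path ystar π

theorem stmt13
    {J K : ℕ} (hJ : 0 < J)
    (path : Fin K → List (Fin J))
    (hnodup : ∀ k, (path k).Nodup) (hne : ∀ k, path k ≠ [])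
    (hcover : ∀ j : Fin J, ∃ k, j ∈ path k)
    (hconn : ∀ j j' : Fin J,
      Relation.ReflTransGen (fun a b => ∃ k, a ∈ path k ∧ b ∈ path k) j j')
    (ρ : Fin K → Fin J → ℝ) (hρ : ∀ j k, j ∈ path k → 0 < ρ k j)
    (hρsum : ∀ j : Fin J, ∑ k ∈ Finset.univ.filter (fun k => j ∈ path k), ρ k j = 1)
    (H : Fin K → ℝ → ℝ) (ystar : Fin K → ℝ)
    (hcont : ∀ k, Continuous (H k))
    (hanti : ∀ k, Antitone (H k))
    (hstrict : ∀ k, StrictAntiOn (H k) (Set.Iic (ystar k)))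
    (hzero : ∀ k, ∀ y, ystar k ≤ y → H k y = 0)
    (hnonneg : ∀ k y, 0 ≤ H k y)
    (hinf : ∀ k, Filter.Tendsto (H k) Filter.atBot Filter.atTop)
    : ∀ M : ℝ, ∃ R : ℝ, ∀ y ∈ Dset path ystar, R ≤ ‖y‖ → M ≤ ‖PhiNet path ρ H y‖ := by
  classical
  intro M
  by_cases hS : (Finset.univ.filter (fun p : Fin K × Fin J => p.2 ∈ path p.1)).Nonempty
  · obtain ⟨p₀, hp₀⟩ := hS
    haveI hK : Nonempty (Fin K) := ⟨p₀.1⟩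
    set S := Finset.univ.filter (fun p : Fin K × Fin J => p.2 ∈ path p.1) with hSdef
    have hSne : S.Nonempty := ⟨p₀, hp₀⟩
    set ρ₀ : ℝ := S.inf' hSne (fun p => ρ p.1 p.2) with hρ₀def
    have hρ₀pos : 0 < ρ₀ := by
      rw [hρ₀def, Finset.lt_inf'_iff]
      intro p hp
      exact hρ p.2 p.1 (by
        rw [hSdef] at hp
        exact (Finset.mem_filter.mp hp).2)
    have hρ₀le : ∀ k j, j ∈ path k → ρ₀ ≤ ρ k j := by
      intro k j hkj
      rw [hρ₀def]
      have hmem : (k, j) ∈ S := by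
        rw [hSdef]
        exact Finset.mem_filter.mpr ⟨Finset.mem_univ _, hkj⟩
      exact Finset.inf'_le (fun p => ρ p.1 p.2) hmem
    set B : ℝ := |M| / ρ₀ with hBdef
    have hℓex : ∀ b : ℝ, ∃ a : ℝ, ∀ k : Fin K, ∀ x : ℝ, x ≤ a → b ≤ H k x := by
      intro b
      have h1 : ∀ k : Fin K, ∃ a : ℝ, ∀ x : ℝ, x ≤ a → b ≤ H k x := by
        intro k
        have h2 := (hinf k).eventually (Filter.eventually_ge_atTop b)
        rw [Filter.eventually_atBot] at h2
        obtain ⟨a, ha⟩ := h2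
        exact ⟨a, fun x hx => ha x hx⟩
      choose a ha using h1
      refine ⟨Finset.univ.inf' Finset.univ_nonempty a, fun k x hx => ?_⟩
      exact ha k x (le_trans hx (Finset.inf'_le a (Finset.mem_univ k)))
    choose ℓ hℓ using hℓex
    set Hmax : ℝ → ℝ := fun x => Finset.univ.sup' Finset.univ_nonempty (fun k => H k x)
      with hHmaxdef
    have hHmaxle : ∀ k x, H k x ≤ Hmax x := fun k x => by
      simp only [hHmaxdef]
      exact Finset.le_sup' (fun k => H k x) (Finset.mem_univ k)
    set L : ℕ → ℝ := fun n =>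
      Nat.rec (ℓ (B + 1)) (fun _ prev => min prev (ℓ (Hmax prev + B + 1))) n with hLdef
    have hLsucc : ∀ n, L (n + 1) = min (L n) (ℓ (Hmax (L n) + B + 1)) := fun n => rfl
    have hLzero : L 0 = ℓ (B + 1) := rfl
    have hLanti : Antitone L :=
      antitone_nat_of_succ_le (fun n => by rw [hLsucc]; exact min_le_left _ _)
    set C : ℝ := Finset.univ.sup' Finset.univ_nonempty ystar with hCdef
    refine ⟨max |C| |L J| + 1, fun y hy hR => ?_⟩
    by_contra hM
    push_neg at hM
    obtain ⟨π, hπ, hyπ⟩ := Set.mem_iUnion₂.mp hy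
    obtain ⟨horder, hwit⟩ := hyπ
    have hΦle : ∀ j : Fin J, PhiNet path ρ H y j ≤ |M| := by
      intro j
      calc PhiNet path ρ H y j ≤ ‖PhiNet path ρ H y j‖ := le_abs_self _
        _ ≤ ‖PhiNet path ρ H y‖ := norm_le_pi_norm _ j
        _ ≤ |M| := le_of_lt (lt_of_lt_of_le hM (le_abs_self M))
    have key : ∀ (m : Fin J) (k : Fin K), π m ∈ path k →
        H k (y (π m)) - (if h : (priorStations path k (π m)).Nonempty
          then H k ((priorStations path k (π m)).inf' h y) else 0) ≤ B := by
      intro m k hk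
      set j := π m with hjdef
      set d : ℝ := (if h : (priorStations path k j).Nonempty
          then H k ((priorStations path k j).inf' h y) else 0) with hd
      have hterm : ρ k j * max (H k (y j) - d) 0 ≤ PhiNet path ρ H y j := by
        rw [hd]
        simp only [PhiNet]
        refine Finset.single_le_sum
          (f := fun k' => ρ k' j * max (H k' (y j) -
            (if h : (priorStations path k' j).Nonempty
              then H k' ((priorStations path k' j).inf' h y) else 0)) 0)
          ?_ (Finset.mem_filter.mpr ⟨Finset.mem_univ k, hk⟩)
        intro k' hk'
        exact mul_nonneg (le_of_lt (hρ j k' (Finset.mem_filter.mp hk').2)) (le_max_right _ _)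
      have h2 : ρ₀ * max (H k (y j) - d) 0 ≤ |M| :=
        le_trans (le_trans (mul_le_mul_of_nonneg_right (hρ₀le k j hk) (le_max_right _ _))
          hterm) (hΦle j)
      have h3 : max (H k (y j) - d) 0 ≤ B := by
        rw [hBdef, le_div_iff₀ hρ₀pos]
        linarith [h2]
      exact le_trans (le_max_left _ _) h3
    have hlow : ∀ n : ℕ, ∀ m : Fin J, m.val = n → L m.val < y (π m) := by
      intro n
      induction n using Nat.strong_induction_on with
      | _ n IH =>
        intro m hm
        obtain ⟨k, ⟨hkpath, hkprior⟩, hky⟩ := hwit m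
        have hdiff := key m k hkpath
        by_cases hpe : (priorStations path k (π m)).Nonempty
        · obtain ⟨i₀, hi₀mem, hi₀eq⟩ := Finset.exists_mem_eq_inf' hpe y
          obtain ⟨m'', hm''lt, hm''eq⟩ := hkprior i₀ hi₀mem
          have hm''v : m''.val < m.val := hm''lt
          have hm1 : 1 ≤ m.val := Nat.one_le_iff_ne_zero.mpr (by omega)
          have hIH : L m''.val < y (π m'') := IH m''.val (hm ▸ hm''v) m'' rfl
          have hLle : L (m.val - 1) ≤ L m''.val := hLanti (by omega)
          have hdle : L (m.val - 1) < y i₀ := by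
            rw [← hm''eq]; exact lt_of_le_of_lt hLle hIH
          have hHd : H k ((priorStations path k (π m)).inf' hpe y)
              ≤ Hmax (L (m.val - 1)) := by
            rw [hi₀eq]
            exact le_trans (hanti k (le_of_lt hdle)) (hHmaxle k _)
          rw [dif_pos hpe] at hdiff
          have hHy : H k (y (π m)) < Hmax (L (m.val - 1)) + B + 1 := by linarith
          have hgt : ¬ (y (π m) ≤ ℓ (Hmax (L (m.val - 1)) + B + 1)) := fun hle => by
            have := hℓ (Hmax (L (m.val - 1)) + B + 1) k _ hle
            linarith
          push_neg at hgt
          have hLm : L m.val ≤ ℓ (Hmax (L (m.val - 1)) + B + 1) := by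
            have heq : m.val = (m.val - 1) + 1 := by omega
            rw [heq, hLsucc]
            exact min_le_right _ _
          exact lt_of_le_of_lt hLm hgt
        · rw [dif_neg hpe] at hdiff
          have hgt : ¬ (y (π m) ≤ ℓ (B + 1)) := fun hle => by
            have := hℓ (B + 1) k _ hle
            linarith
          push_neg at hgt
          exact lt_of_le_of_lt (le_trans (hLanti (Nat.zero_le m.val)) (le_of_eq hLzero)) hgt
    have hbound : ∀ j : Fin J, |y j| ≤ max |C| |L J| := by
      intro j
      have h1 : L J < y j := by
        have h := hlow (π.symm j).val (π.symm j) rfl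
        rw [Equiv.apply_symm_apply] at h
        exact lt_of_le_of_lt (hLanti (le_of_lt (π.symm j).isLt)) h
      have h2 : y j ≤ C := by
        have h0 : (⟨0, hJ⟩ : Fin J) ≤ π.symm j := by
          simp [Fin.le_def]
        have horr := horder ⟨0, hJ⟩ (π.symm j) h0
        rw [Equiv.apply_symm_apply] at horr
        obtain ⟨k0, _, hk0y⟩ := hwit ⟨0, hJ⟩
        exact le_trans horr (le_trans hk0y (Finset.le_sup' _ (Finset.mem_univ k0)))
      rw [abs_le]
      constructor
      · have hn : -|L J| ≤ L J := neg_abs_le _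
        have := le_max_right |C| |L J|
        linarith
      · exact le_trans h2 (le_trans (le_abs_self C) (le_max_left _ _))
    have hnorm : ‖y‖ ≤ max |C| |L J| := by
      rw [pi_norm_le_iff_of_nonneg (le_trans (abs_nonneg C) (le_max_left _ _))]
      intro j
      rw [Real.norm_eq_abs]
      exact hbound j
    linarith
  · refine ⟨0, fun y hy _ => absurd ?_ hS⟩
    obtain ⟨π, hπ, hyπ⟩ := Set.mem_iUnion₂.mp hy
    obtain ⟨k, ⟨hk1, _⟩, _⟩ := hyπ.2 ⟨0, hJ⟩
    exact ⟨(k, π ⟨0, hJ⟩), by simp [hk1]⟩
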